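/- arXiv:2507.10698 — 7 statements merged into one kernel-verified Lean document; each statement's English description precedes it below -/
import Mathlib

section
/- If a 4×4 positive semidefinite Hermitian matrix M satisfies ⟨i|M|j⟩·⟨bi|bj⟩ = 0 for the specific pairs of product states listed (where the second-factor inner products ⟨0+1|1+2⟩, ⟨2+3|2+3⟩, ⟨2+3|2⟩, ⟨1+2|2+3⟩, ⟨1+2|2⟩, ⟨2|2+3⟩ are all nonzero), then all off-diagonal entries of M vanish, i.e., M is diagonal. -/
open scoped BigOperators ComplexOrder

noncomputable section

/-- Standard basis vector of ℂ⁴. -/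
def e4 (i : Fin 4) : Fin 4 → ℂ := fun j => if j = i then 1 else 0

/-- Inner product on ℂ⁴ (conjugate-linear in the first argument). -/
def dot4 (x y : Fin 4 → ℂ) : ℂ := ∑ i, star (x i) * y i

/-- `|i+j⟩ = (|i⟩+|j⟩)/√2`. -/
def p4 (i j : Fin 4) : Fin 4 → ℂ := ((Real.sqrt 2 : ℂ))⁻¹ • (e4 i + e4 j)

/-- `|i−j⟩ = (|i⟩−|j⟩)/√2`. -/
def m4 (i j : Fin 4) : Fin 4 → ℂ := ((Real.sqrt 2 : ℂ))⁻¹ • (e4 i - e4 j)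

/-- if a 4×4 PSD Hermitian `M` satisfies `M i j · ⟨bᵢ|bⱼ⟩ = 0` for the listed
pairs (whose second-factor inner products are nonzero), then `M` is diagonal. -/
theorem stmt0 (M : Matrix (Fin 4) (Fin 4) ℂ) (hM : M.PosSemidef)
    (h01 : M 0 1 * dot4 (p4 0 1) (p4 1 2) = 0)
    (h02 : M 0 2 * dot4 (p4 2 3) (p4 2 3) = 0)
    (h03 : M 0 3 * dot4 (p4 2 3) (e4 2) = 0)
    (h12 : M 1 2 * dot4 (p4 1 2) (p4 2 3) = 0)
    (h13 : M 1 3 * dot4 (p4 1 2) (e4 2) = 0)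
    (h23 : M 2 3 * dot4 (e4 2) (p4 2 3) = 0) :
    ∀ i j : Fin 4, i ≠ j → M i j = 0 := by
  have hs : ((Real.sqrt 2 : ℂ)) ≠ 0 := by
    norm_num [Complex.ext_iff, Real.sqrt_eq_zero']
  have hd01 : dot4 (p4 0 1) (p4 1 2) ≠ 0 := by
    simp (config := { decide := true }) only [dot4, p4, e4, Fin.sum_univ_four, Pi.smul_apply, Pi.add_apply, smul_eq_mul]
    norm_num [star_mul', mul_ne_zero_iff, hs]
  have hd02 : dot4 (p4 2 3) (p4 2 3) ≠ 0 := by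
    simp (config := { decide := true }) only [dot4, p4, e4, Fin.sum_univ_four, Pi.smul_apply, Pi.add_apply, smul_eq_mul]
    norm_num [star_mul', mul_ne_zero_iff, hs]
  have hd03 : dot4 (p4 2 3) (e4 2) ≠ 0 := by
    simp (config := { decide := true }) only [dot4, p4, e4, Fin.sum_univ_four, Pi.smul_apply, Pi.add_apply, smul_eq_mul]
    norm_num [star_mul', mul_ne_zero_iff, hs]
  have hd12 : dot4 (p4 1 2) (p4 2 3) ≠ 0 := by
    simp (config := { decide := true }) only [dot4, p4, e4, Fin.sum_univ_four, Pi.smul_apply, Pi.add_apply, smul_eq_mul]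
    norm_num [star_mul', mul_ne_zero_iff, hs]
  have hd13 : dot4 (p4 1 2) (e4 2) ≠ 0 := by
    simp (config := { decide := true }) only [dot4, p4, e4, Fin.sum_univ_four, Pi.smul_apply, Pi.add_apply, smul_eq_mul]
    norm_num [star_mul', mul_ne_zero_iff, hs]
  have hd23 : dot4 (e4 2) (p4 2 3) ≠ 0 := by
    simp (config := { decide := true }) only [dot4, p4, e4, Fin.sum_univ_four, Pi.smul_apply, Pi.add_apply, smul_eq_mul]
    norm_num [star_mul', mul_ne_zero_iff, hs]
  have h01' := (mul_eq_zero.mp h01).resolve_right hd01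
  have h02' := (mul_eq_zero.mp h02).resolve_right hd02
  have h03' := (mul_eq_zero.mp h03).resolve_right hd03
  have h12' := (mul_eq_zero.mp h12).resolve_right hd12
  have h13' := (mul_eq_zero.mp h13).resolve_right hd13
  have h23' := (mul_eq_zero.mp h23).resolve_right hd23
  have herm := hM.isHermitian
  intro i j hij
  fin_cases i <;> fin_cases j <;> simp_all <;>
    [rw [← herm.apply 1 0, h01', star_zero];
     rw [← herm.apply 2 0, h02', star_zero];
     rw [← herm.apply 2 1, h12', star_zero];
     rw [← herm.apply 3 0, h03', star_zero];
     rw [← herm.apply 3 1, h13', star_zero];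
     rw [← herm.apply 3 2, h23', star_zero]]


end
end

section
/- Let P be the orthogonal projection of ℂ⁶ onto span{|0⟩,|1⟩,|2⟩} and Q the orthogonal projection onto span{|3⟩,|4⟩,|5⟩}. Applying P⊗P to the ten states of S₃ sends |φ₆⟩,…,|φ₁₀⟩ to 0 and sends |φ₁⟩,…,|φ₅⟩ (up to nonzero scalars) to the five states |0⟩(|0⟩−|1⟩), |2⟩(|1⟩−|2⟩), (|1⟩−|2⟩)|0⟩, (|0⟩−|1⟩)|2⟩, (|0⟩+|1⟩+|2⟩)(|0⟩+|1⟩+|2⟩), which form (up to normalization) the Bennett 3×3 unextendible product basis 'tiles' set. -/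
open scoped BigOperators

noncomputable section

def e6 (i : Fin 6) : Fin 6 → ℂ := fun j => if j = i then 1 else 0
def dot6 (x y : Fin 6 → ℂ) : ℂ := ∑ i, star (x i) * y i
/-- Tensor product of two vectors of ℂ⁶, as a vector of ℂ⁶⊗ℂ⁶ ≅ ℂ^{6×6}. -/
def tp6 (a b : Fin 6 → ℂ) : Fin 6 × Fin 6 → ℂ := fun x => a x.1 * b x.2
/-- Inner product on ℂ⁶⊗ℂ⁶. -/
def dotT6 (x y : Fin 6 × Fin 6 → ℂ) : ℂ := ∑ p, star (x p) * y p

/-- The ten product states of `S₃ ⊂ ℂ⁶⊗ℂ⁶` (unnormalized), `φ 0 = |φ₁⟩, …, φ 9 = |φ₁₀⟩`. -/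
def φ : Fin 10 → (Fin 6 × Fin 6 → ℂ) :=
  ![tp6 (e6 0) (e6 0 - e6 1 + e6 4 - e6 5),
    tp6 (e6 2) (e6 1 - e6 2 + e6 5 - e6 3),
    tp6 (e6 1 - e6 2) (e6 0 - e6 4),
    tp6 (e6 0 - e6 1) (e6 2 - e6 3),
    tp6 (e6 0 + e6 1 + e6 2) (e6 0 + e6 1 + e6 2 + e6 3 + e6 4 + e6 5),
    tp6 (e6 3) (e6 0 - e6 1 + e6 4 - e6 5),
    tp6 (e6 5) (e6 1 - e6 2 + e6 5 - e6 3),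
    tp6 (e6 4 - e6 5) (e6 0 - e6 4),
    tp6 (e6 3 - e6 4) (e6 2 - e6 3),
    tp6 (e6 3 + e6 4 + e6 5) (e6 0 + e6 1 + e6 2 + e6 3 + e6 4 + e6 5)]

/-- `P⊗P` where `P` projects ℂ⁶ onto `span{|0⟩,|1⟩,|2⟩}`. -/
def PP (w : Fin 6 × Fin 6 → ℂ) : Fin 6 × Fin 6 → ℂ :=
  fun x => if (x.1 : ℕ) < 3 ∧ (x.2 : ℕ) < 3 then w x else 0

/-- The five Bennett 3×3 tiles-UPB states, viewed inside ℂ⁶⊗ℂ⁶. -/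
def tiles : Fin 5 → (Fin 6 × Fin 6 → ℂ) :=
  ![tp6 (e6 0) (e6 0 - e6 1),
    tp6 (e6 2) (e6 1 - e6 2),
    tp6 (e6 1 - e6 2) (e6 0),
    tp6 (e6 0 - e6 1) (e6 2),
    tp6 (e6 0 + e6 1 + e6 2) (e6 0 + e6 1 + e6 2)]


def P6 (a : Fin 6 → ℂ) : Fin 6 → ℂ := fun j => if (j : ℕ) < 3 then a j else 0

lemma PP_tp6 (a b : Fin 6 → ℂ) : PP (tp6 a b) = tp6 (P6 a) (P6 b) := by
  funext x
  simp only [PP, tp6, P6]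
  by_cases h1 : (x.1 : ℕ) < 3 <;> by_cases h2 : (x.2 : ℕ) < 3 <;> simp [h1, h2]

lemma tp6_zero_left (b : Fin 6 → ℂ) : tp6 0 b = 0 := funext fun x => zero_mul _

lemma pz1 : P6 (e6 3) = 0 := by funext j; fin_cases j <;> simp (config := { decide := true }) [P6, e6]
lemma pz2 : P6 (e6 5) = 0 := by funext j; fin_cases j <;> simp (config := { decide := true }) [P6, e6]
lemma pz3 : P6 (e6 4 - e6 5) = 0 := by funext j; fin_cases j <;> simp (config := { decide := true }) [P6, e6]
lemma pz4 : P6 (e6 3 - e6 4) = 0 := by funext j; fin_cases j <;> simp (config := { decide := true }) [P6, e6]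
lemma pz5 : P6 (e6 3 + e6 4 + e6 5) = 0 := by funext j; fin_cases j <;> simp (config := { decide := true }) [P6, e6]
lemma pa1 : P6 (e6 0) = e6 0 := by funext j; fin_cases j <;> simp (config := { decide := true }) [P6, e6]
lemma pa2 : P6 (e6 2) = e6 2 := by funext j; fin_cases j <;> simp (config := { decide := true }) [P6, e6]
lemma pa3 : P6 (e6 1 - e6 2) = e6 1 - e6 2 := by funext j; fin_cases j <;> simp (config := { decide := true }) [P6, e6]
lemma pa4 : P6 (e6 0 - e6 1) = e6 0 - e6 1 := by funext j; fin_cases j <;> simp (config := { decide := true }) [P6, e6]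
lemma pa5 : P6 (e6 0 + e6 1 + e6 2) = e6 0 + e6 1 + e6 2 := by funext j; fin_cases j <;> simp (config := { decide := true }) [P6, e6]
lemma pb1 : P6 (e6 0 - e6 1 + e6 4 - e6 5) = e6 0 - e6 1 := by funext j; fin_cases j <;> simp (config := { decide := true }) [P6, e6]
lemma pb2 : P6 (e6 1 - e6 2 + e6 5 - e6 3) = e6 1 - e6 2 := by funext j; fin_cases j <;> simp (config := { decide := true }) [P6, e6]
lemma pb3 : P6 (e6 0 - e6 4) = e6 0 := by funext j; fin_cases j <;> simp (config := { decide := true }) [P6, e6]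
lemma pb4 : P6 (e6 2 - e6 3) = e6 2 := by funext j; fin_cases j <;> simp (config := { decide := true }) [P6, e6]
lemma pb5 : P6 (e6 0 + e6 1 + e6 2 + e6 3 + e6 4 + e6 5) = e6 0 + e6 1 + e6 2 := by
  funext j; fin_cases j <;> simp (config := { decide := true }) [P6, e6]


lemma k1 : PP (tp6 (e6 3) (e6 0 - e6 1 + e6 4 - e6 5)) = 0 := by
  rw [PP_tp6, pz1, tp6_zero_left]
lemma k2 : PP (tp6 (e6 5) (e6 1 - e6 2 + e6 5 - e6 3)) = 0 := by
  rw [PP_tp6, pz2, tp6_zero_left]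
lemma k3 : PP (tp6 (e6 4 - e6 5) (e6 0 - e6 4)) = 0 := by
  rw [PP_tp6, pz3, tp6_zero_left]
lemma k4 : PP (tp6 (e6 3 - e6 4) (e6 2 - e6 3)) = 0 := by
  rw [PP_tp6, pz4, tp6_zero_left]
lemma k5 : PP (tp6 (e6 3 + e6 4 + e6 5) (e6 0 + e6 1 + e6 2 + e6 3 + e6 4 + e6 5)) = 0 := by
  rw [PP_tp6, pz5, tp6_zero_left]
lemma g1 : PP (tp6 (e6 0) (e6 0 - e6 1 + e6 4 - e6 5)) = (1 : ℂ) • tp6 (e6 0) (e6 0 - e6 1) := by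
  rw [PP_tp6, pa1, pb1, one_smul]
lemma g2 : PP (tp6 (e6 2) (e6 1 - e6 2 + e6 5 - e6 3)) = (1 : ℂ) • tp6 (e6 2) (e6 1 - e6 2) := by
  rw [PP_tp6, pa2, pb2, one_smul]
lemma g3 : PP (tp6 (e6 1 - e6 2) (e6 0 - e6 4)) = (1 : ℂ) • tp6 (e6 1 - e6 2) (e6 0) := by
  rw [PP_tp6, pa3, pb3, one_smul]
lemma g4 : PP (tp6 (e6 0 - e6 1) (e6 2 - e6 3)) = (1 : ℂ) • tp6 (e6 0 - e6 1) (e6 2) := by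
  rw [PP_tp6, pa4, pb4, one_smul]
lemma g5 : PP (tp6 (e6 0 + e6 1 + e6 2) (e6 0 + e6 1 + e6 2 + e6 3 + e6 4 + e6 5)) =
    (1 : ℂ) • tp6 (e6 0 + e6 1 + e6 2) (e6 0 + e6 1 + e6 2) := by
  rw [PP_tp6, pa5, pb5, one_smul]

/-- `P⊗P` annihilates `|φ₆⟩,…,|φ₁₀⟩` and sends `|φ₁⟩,…,|φ₅⟩`,
up to nonzero scalars, to the five Bennett tiles states. -/
theorem stmt5 :
    ∀ i : Fin 5,
      PP (φ (Fin.castLE (by norm_num) i + 5)) = 0 ∧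
      ∃ c : ℂ, c ≠ 0 ∧ PP (φ (Fin.castLE (by norm_num) i)) = c • tiles i := by
  intro i
  fin_cases i
  · exact ⟨k1, 1, one_ne_zero, g1⟩
  · exact ⟨k2, 1, one_ne_zero, g2⟩
  · exact ⟨k3, 1, one_ne_zero, g3⟩
  · exact ⟨k4, 1, one_ne_zero, g4⟩
  · exact ⟨k5, 1, one_ne_zero, g5⟩
end
end

section
/- Let P be the orthogonal projection of ℂ⁶ onto span{|0⟩,|1⟩,|2⟩} and Q onto span{|3⟩,|4⟩,|5⟩}. Applying P⊗Q to the ten states of S₃ annihilates |φ₆⟩,…,|φ₁₀⟩ and maps |φ₁⟩,…,|φ₅⟩ (up to nonzero scalars) to |0⟩(|4⟩−|5⟩), |2⟩(|5⟩−|3⟩), (|1⟩−|2⟩)|4⟩, (|0⟩−|1⟩)|3⟩, (|0⟩+|1⟩+|2⟩)(|3⟩+|4⟩+|5⟩), which are pairwise orthogonal product states in ℂ³⊗ℂ³ (after relabeling Bob's basis |3⟩,|4⟩,|5⟩ as a qutrit) forming a tiles-type unextendible product basis. -/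
open scoped BigOperators

noncomputable section

/-- `P⊗Q` where `P` projects onto `span{|0⟩,|1⟩,|2⟩}` and `Q` onto `span{|3⟩,|4⟩,|5⟩}`. -/
def PQ (w : Fin 6 × Fin 6 → ℂ) : Fin 6 × Fin 6 → ℂ :=
  fun x => if (x.1 : ℕ) < 3 ∧ 3 ≤ (x.2 : ℕ) then w x else 0

/-- The five image states of `|φ₁⟩,…,|φ₅⟩` under `P⊗Q`. -/
def img : Fin 5 → (Fin 6 × Fin 6 → ℂ) :=
  ![tp6 (e6 0) (e6 4 - e6 5),
    tp6 (e6 2) (e6 5 - e6 3),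
    tp6 (e6 1 - e6 2) (e6 4),
    tp6 (e6 0 - e6 1) (e6 3),
    tp6 (e6 0 + e6 1 + e6 2) (e6 3 + e6 4 + e6 5)]

lemma PQ_tp6 (a b : Fin 6 → ℂ) : PQ (tp6 a b) =
    tp6 (fun i => if (i:ℕ) < 3 then a i else 0) (fun j => if 3 ≤ (j:ℕ) then b j else 0) := by
  funext x
  by_cases h1 : (x.1:ℕ) < 3 <;> by_cases h2 : 3 ≤ (x.2:ℕ) <;> simp [PQ, tp6, h1, h2]

lemma tp6_neg_right (a b : Fin 6 → ℂ) : tp6 a (-b) = -(tp6 a b) := by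
  funext x; simp [tp6]

lemma dotT6_tp6 (a b c d : Fin 6 → ℂ) :
    dotT6 (tp6 a b) (tp6 c d) = dot6 a c * dot6 b d := by
  rw [dotT6, dot6, dot6, Finset.sum_mul_sum, Fintype.sum_prod_type]
  refine Finset.sum_congr rfl fun i _ => Finset.sum_congr rfl fun j _ => ?_
  simp [tp6, star_mul']; ring

/-- `P⊗Q` annihilates `|φ₆⟩,…,|φ₁₀⟩` and maps `|φ₁⟩,…,|φ₅⟩`, up to nonzero
scalars, to the listed states, which are nonzero, pairwise orthogonal, and lie in
`(range P)⊗(range Q)`. -/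
theorem stmt6 :
    (∀ i : Fin 5,
      PQ (φ (Fin.castLE (by norm_num) i + 5)) = 0 ∧
      ∃ c : ℂ, c ≠ 0 ∧ PQ (φ (Fin.castLE (by norm_num) i)) = c • img i) ∧
    (∀ i : Fin 5, img i ≠ 0) ∧
    (∀ i j : Fin 5, i ≠ j → dotT6 (img i) (img j) = 0) ∧
    (∀ (i : Fin 5) (x : Fin 6 × Fin 6),
      ¬((x.1 : ℕ) < 3 ∧ 3 ≤ (x.2 : ℕ)) → img i x = 0) := by
  refine ⟨?_, ?_, ?_, ?_⟩
  · intro i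
    fin_cases i
    · refine ⟨?_, 1, by norm_num, ?_⟩
      · show PQ (tp6 (e6 3) (e6 0 - e6 1 + e6 4 - e6 5)) = 0
        have ha : (fun i : Fin 6 => if (i:ℕ) < 3 then (e6 3) i else 0) = 0 := by
          funext j; fin_cases j <;> simp (config := { decide := true }) [e6]
        rw [PQ_tp6, ha, tp6_zero_left]
      · show PQ (tp6 (e6 0) (e6 0 - e6 1 + e6 4 - e6 5)) = (1:ℂ) • tp6 (e6 0) (e6 4 - e6 5)
        have ha : (fun i : Fin 6 => if (i:ℕ) < 3 then (e6 0) i else 0) = e6 0 := by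
          funext j; fin_cases j <;> simp (config := { decide := true }) [e6]
        have hb : (fun j : Fin 6 => if 3 ≤ (j:ℕ) then (e6 0 - e6 1 + e6 4 - e6 5) j else 0) = e6 4 - e6 5 := by
          funext j; fin_cases j <;> simp (config := { decide := true }) [e6]
        rw [PQ_tp6, ha, hb, one_smul]
    · refine ⟨?_, 1, by norm_num, ?_⟩
      · show PQ (tp6 (e6 5) (e6 1 - e6 2 + e6 5 - e6 3)) = 0
        have ha : (fun i : Fin 6 => if (i:ℕ) < 3 then (e6 5) i else 0) = 0 := by
          funext j; fin_cases j <;> simp (config := { decide := true }) [e6]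
        rw [PQ_tp6, ha, tp6_zero_left]
      · show PQ (tp6 (e6 2) (e6 1 - e6 2 + e6 5 - e6 3)) = (1:ℂ) • tp6 (e6 2) (e6 5 - e6 3)
        have ha : (fun i : Fin 6 => if (i:ℕ) < 3 then (e6 2) i else 0) = e6 2 := by
          funext j; fin_cases j <;> simp (config := { decide := true }) [e6]
        have hb : (fun j : Fin 6 => if 3 ≤ (j:ℕ) then (e6 1 - e6 2 + e6 5 - e6 3) j else 0) = e6 5 - e6 3 := by
          funext j; fin_cases j <;> simp (config := { decide := true }) [e6]
        rw [PQ_tp6, ha, hb, one_smul]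
    · refine ⟨?_, -1, by norm_num, ?_⟩
      · show PQ (tp6 (e6 4 - e6 5) (e6 0 - e6 4)) = 0
        have ha : (fun i : Fin 6 => if (i:ℕ) < 3 then (e6 4 - e6 5) i else 0) = 0 := by
          funext j; fin_cases j <;> simp (config := { decide := true }) [e6]
        rw [PQ_tp6, ha, tp6_zero_left]
      · show PQ (tp6 (e6 1 - e6 2) (e6 0 - e6 4)) = (-1:ℂ) • tp6 (e6 1 - e6 2) (e6 4)
        have ha : (fun i : Fin 6 => if (i:ℕ) < 3 then (e6 1 - e6 2) i else 0) = e6 1 - e6 2 := by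
          funext j; fin_cases j <;> simp (config := { decide := true }) [e6]
        have hb : (fun j : Fin 6 => if 3 ≤ (j:ℕ) then (e6 0 - e6 4) j else 0) = -(e6 4) := by
          funext j; fin_cases j <;> simp (config := { decide := true }) [e6]
        rw [PQ_tp6, ha, hb, tp6_neg_right]
        exact (neg_one_smul ℂ _).symm
    · refine ⟨?_, -1, by norm_num, ?_⟩
      · show PQ (tp6 (e6 3 - e6 4) (e6 2 - e6 3)) = 0
        have ha : (fun i : Fin 6 => if (i:ℕ) < 3 then (e6 3 - e6 4) i else 0) = 0 := by
          funext j; fin_cases j <;> simp (config := { decide := true }) [e6]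
        rw [PQ_tp6, ha, tp6_zero_left]
      · show PQ (tp6 (e6 0 - e6 1) (e6 2 - e6 3)) = (-1:ℂ) • tp6 (e6 0 - e6 1) (e6 3)
        have ha : (fun i : Fin 6 => if (i:ℕ) < 3 then (e6 0 - e6 1) i else 0) = e6 0 - e6 1 := by
          funext j; fin_cases j <;> simp (config := { decide := true }) [e6]
        have hb : (fun j : Fin 6 => if 3 ≤ (j:ℕ) then (e6 2 - e6 3) j else 0) = -(e6 3) := by
          funext j; fin_cases j <;> simp (config := { decide := true }) [e6]
        rw [PQ_tp6, ha, hb, tp6_neg_right]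
        exact (neg_one_smul ℂ _).symm
    · refine ⟨?_, 1, by norm_num, ?_⟩
      · show PQ (tp6 (e6 3 + e6 4 + e6 5) (e6 0 + e6 1 + e6 2 + e6 3 + e6 4 + e6 5)) = 0
        have ha : (fun i : Fin 6 => if (i:ℕ) < 3 then (e6 3 + e6 4 + e6 5) i else 0) = 0 := by
          funext j; fin_cases j <;> simp (config := { decide := true }) [e6]
        rw [PQ_tp6, ha, tp6_zero_left]
      · show PQ (tp6 (e6 0 + e6 1 + e6 2) (e6 0 + e6 1 + e6 2 + e6 3 + e6 4 + e6 5)) = (1:ℂ) • tp6 (e6 0 + e6 1 + e6 2) (e6 3 + e6 4 + e6 5)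
        have ha : (fun i : Fin 6 => if (i:ℕ) < 3 then (e6 0 + e6 1 + e6 2) i else 0) = e6 0 + e6 1 + e6 2 := by
          funext j; fin_cases j <;> simp (config := { decide := true }) [e6]
        have hb : (fun j : Fin 6 => if 3 ≤ (j:ℕ) then (e6 0 + e6 1 + e6 2 + e6 3 + e6 4 + e6 5) j else 0) = e6 3 + e6 4 + e6 5 := by
          funext j; fin_cases j <;> simp (config := { decide := true }) [e6]
        rw [PQ_tp6, ha, hb, one_smul]
  · intro i
    fin_cases i
    · intro h
      have h2 : (tp6 (e6 0) (e6 4 - e6 5)) (0, 4) = 0 := congrFun h (0, 4)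
      simp (config := { decide := true }) [tp6, e6] at h2
    · intro h
      have h2 : (tp6 (e6 2) (e6 5 - e6 3)) (2, 5) = 0 := congrFun h (2, 5)
      simp (config := { decide := true }) [tp6, e6] at h2
    · intro h
      have h2 : (tp6 (e6 1 - e6 2) (e6 4)) (1, 4) = 0 := congrFun h (1, 4)
      simp (config := { decide := true }) [tp6, e6] at h2
    · intro h
      have h2 : (tp6 (e6 0 - e6 1) (e6 3)) (0, 3) = 0 := congrFun h (0, 3)
      simp (config := { decide := true }) [tp6, e6] at h2
    · intro h
      have h2 : (tp6 (e6 0 + e6 1 + e6 2) (e6 3 + e6 4 + e6 5)) (0, 3) = 0 := congrFun h (0, 3)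
      simp (config := { decide := true }) [tp6, e6] at h2
  · intro i j hij
    fin_cases i
    all_goals fin_cases j
    · exact absurd rfl hij
    · show dotT6 (tp6 (e6 0) (e6 4 - e6 5)) (tp6 (e6 2) (e6 5 - e6 3)) = 0
      rw [dotT6_tp6]
      simp (config := { decide := true }) [dot6, e6, Fin.sum_univ_succ]
    · show dotT6 (tp6 (e6 0) (e6 4 - e6 5)) (tp6 (e6 1 - e6 2) (e6 4)) = 0
      rw [dotT6_tp6]
      simp (config := { decide := true }) [dot6, e6, Fin.sum_univ_succ]
    · show dotT6 (tp6 (e6 0) (e6 4 - e6 5)) (tp6 (e6 0 - e6 1) (e6 3)) = 0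
      rw [dotT6_tp6]
      simp (config := { decide := true }) [dot6, e6, Fin.sum_univ_succ]
    · show dotT6 (tp6 (e6 0) (e6 4 - e6 5)) (tp6 (e6 0 + e6 1 + e6 2) (e6 3 + e6 4 + e6 5)) = 0
      rw [dotT6_tp6]
      simp (config := { decide := true }) [dot6, e6, Fin.sum_univ_succ]
    · show dotT6 (tp6 (e6 2) (e6 5 - e6 3)) (tp6 (e6 0) (e6 4 - e6 5)) = 0
      rw [dotT6_tp6]
      simp (config := { decide := true }) [dot6, e6, Fin.sum_univ_succ]
    · exact absurd rfl hij
    · show dotT6 (tp6 (e6 2) (e6 5 - e6 3)) (tp6 (e6 1 - e6 2) (e6 4)) = 0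
      rw [dotT6_tp6]
      simp (config := { decide := true }) [dot6, e6, Fin.sum_univ_succ]
    · show dotT6 (tp6 (e6 2) (e6 5 - e6 3)) (tp6 (e6 0 - e6 1) (e6 3)) = 0
      rw [dotT6_tp6]
      simp (config := { decide := true }) [dot6, e6, Fin.sum_univ_succ]
    · show dotT6 (tp6 (e6 2) (e6 5 - e6 3)) (tp6 (e6 0 + e6 1 + e6 2) (e6 3 + e6 4 + e6 5)) = 0
      rw [dotT6_tp6]
      simp (config := { decide := true }) [dot6, e6, Fin.sum_univ_succ]
    · show dotT6 (tp6 (e6 1 - e6 2) (e6 4)) (tp6 (e6 0) (e6 4 - e6 5)) = 0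
      rw [dotT6_tp6]
      simp (config := { decide := true }) [dot6, e6, Fin.sum_univ_succ]
    · show dotT6 (tp6 (e6 1 - e6 2) (e6 4)) (tp6 (e6 2) (e6 5 - e6 3)) = 0
      rw [dotT6_tp6]
      simp (config := { decide := true }) [dot6, e6, Fin.sum_univ_succ]
    · exact absurd rfl hij
    · show dotT6 (tp6 (e6 1 - e6 2) (e6 4)) (tp6 (e6 0 - e6 1) (e6 3)) = 0
      rw [dotT6_tp6]
      simp (config := { decide := true }) [dot6, e6, Fin.sum_univ_succ]
    · show dotT6 (tp6 (e6 1 - e6 2) (e6 4)) (tp6 (e6 0 + e6 1 + e6 2) (e6 3 + e6 4 + e6 5)) = 0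
      rw [dotT6_tp6]
      simp (config := { decide := true }) [dot6, e6, Fin.sum_univ_succ]
    · show dotT6 (tp6 (e6 0 - e6 1) (e6 3)) (tp6 (e6 0) (e6 4 - e6 5)) = 0
      rw [dotT6_tp6]
      simp (config := { decide := true }) [dot6, e6, Fin.sum_univ_succ]
    · show dotT6 (tp6 (e6 0 - e6 1) (e6 3)) (tp6 (e6 2) (e6 5 - e6 3)) = 0
      rw [dotT6_tp6]
      simp (config := { decide := true }) [dot6, e6, Fin.sum_univ_succ]
    · show dotT6 (tp6 (e6 0 - e6 1) (e6 3)) (tp6 (e6 1 - e6 2) (e6 4)) = 0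
      rw [dotT6_tp6]
      simp (config := { decide := true }) [dot6, e6, Fin.sum_univ_succ]
    · exact absurd rfl hij
    · show dotT6 (tp6 (e6 0 - e6 1) (e6 3)) (tp6 (e6 0 + e6 1 + e6 2) (e6 3 + e6 4 + e6 5)) = 0
      rw [dotT6_tp6]
      simp (config := { decide := true }) [dot6, e6, Fin.sum_univ_succ]
    · show dotT6 (tp6 (e6 0 + e6 1 + e6 2) (e6 3 + e6 4 + e6 5)) (tp6 (e6 0) (e6 4 - e6 5)) = 0
      rw [dotT6_tp6]
      simp (config := { decide := true }) [dot6, e6, Fin.sum_univ_succ]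
    · show dotT6 (tp6 (e6 0 + e6 1 + e6 2) (e6 3 + e6 4 + e6 5)) (tp6 (e6 2) (e6 5 - e6 3)) = 0
      rw [dotT6_tp6]
      simp (config := { decide := true }) [dot6, e6, Fin.sum_univ_succ]
    · show dotT6 (tp6 (e6 0 + e6 1 + e6 2) (e6 3 + e6 4 + e6 5)) (tp6 (e6 1 - e6 2) (e6 4)) = 0
      rw [dotT6_tp6]
      simp (config := { decide := true }) [dot6, e6, Fin.sum_univ_succ]
    · show dotT6 (tp6 (e6 0 + e6 1 + e6 2) (e6 3 + e6 4 + e6 5)) (tp6 (e6 0 - e6 1) (e6 3)) = 0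
      rw [dotT6_tp6]
      simp (config := { decide := true }) [dot6, e6, Fin.sum_univ_succ]
    · exact absurd rfl hij
  · intro i x hx
    rcases x with ⟨a, b⟩
    rw [not_and_or, not_lt, not_le] at hx
    replace hx : 3 ≤ (a:ℕ) ∨ (b:ℕ) < 3 := hx
    fin_cases i
    · show (tp6 (e6 0) (e6 4 - e6 5)) (a, b) = 0
      rcases hx with h | h
      · have : (e6 0) a = 0 := by
          fin_cases a <;> first
            | exact absurd h (by decide)
            | simp (config := { decide := true }) [e6]
        simp [tp6, this]
      · have : (e6 4 - e6 5) b = 0 := by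
          fin_cases b <;> first
            | exact absurd h (by decide)
            | simp (config := { decide := true }) [e6]
        simp [tp6, this]
    · show (tp6 (e6 2) (e6 5 - e6 3)) (a, b) = 0
      rcases hx with h | h
      · have : (e6 2) a = 0 := by
          fin_cases a <;> first
            | exact absurd h (by decide)
            | simp (config := { decide := true }) [e6]
        simp [tp6, this]
      · have : (e6 5 - e6 3) b = 0 := by
          fin_cases b <;> first
            | exact absurd h (by decide)
            | simp (config := { decide := true }) [e6]
        simp [tp6, this]
    · show (tp6 (e6 1 - e6 2) (e6 4)) (a, b) = 0
      rcases hx with h | h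
      · have : (e6 1 - e6 2) a = 0 := by
          fin_cases a <;> first
            | exact absurd h (by decide)
            | simp (config := { decide := true }) [e6]
        simp [tp6, this]
      · have : (e6 4) b = 0 := by
          fin_cases b <;> first
            | exact absurd h (by decide)
            | simp (config := { decide := true }) [e6]
        simp [tp6, this]
    · show (tp6 (e6 0 - e6 1) (e6 3)) (a, b) = 0
      rcases hx with h | h
      · have : (e6 0 - e6 1) a = 0 := by
          fin_cases a <;> first
            | exact absurd h (by decide)
            | simp (config := { decide := true }) [e6]
        simp [tp6, this]
      · have : (e6 3) b = 0 := by
          fin_cases b <;> first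
            | exact absurd h (by decide)
            | simp (config := { decide := true }) [e6]
        simp [tp6, this]
    · show (tp6 (e6 0 + e6 1 + e6 2) (e6 3 + e6 4 + e6 5)) (a, b) = 0
      rcases hx with h | h
      · have : (e6 0 + e6 1 + e6 2) a = 0 := by
          fin_cases a <;> first
            | exact absurd h (by decide)
            | simp (config := { decide := true }) [e6]
        simp [tp6, this]
      · have : (e6 3 + e6 4 + e6 5) b = 0 := by
          fin_cases b <;> first
            | exact absurd h (by decide)
            | simp (config := { decide := true }) [e6]
        simp [tp6, this]

end
end

section
/- Suppose M is a 4×4 positive semidefinite matrix acting on Alice's system such that (M⊗I)|ψ⟩ ⊥ (M⊗I)|ψ'⟩ for all distinct |ψ⟩,|ψ'⟩ in S₁ — equivalently ⟨ψ|(M†M⊗I)|ψ'⟩ = 0 for M a measurement Kraus operator with N := M†M. Then N = diag(δ₀, γ, γ, γ) for some δ₀, γ ≥ 0; i.e., every orthogonality-preserving measurement operator of Alice on S₁ has this two-block diagonal form. -/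
open scoped BigOperators ComplexOrder

noncomputable section

/-- The 16 product states of `S₁ ⊂ ℂ⁴⊗ℂ⁴`, as (Alice factor, Bob factor) pairs. -/
def S1 : Fin 16 → (Fin 4 → ℂ) × (Fin 4 → ℂ) :=
  ![(e4 0, p4 0 1), (e4 0, m4 0 1), (e4 0, p4 2 3), (e4 0, m4 2 3),
    (p4 1 2, e4 0), (m4 1 2, e4 0), (e4 3, e4 0),
    (e4 1, p4 1 2), (e4 1, m4 1 2), (e4 1, e4 3),
    (p4 2 3, e4 1), (m4 2 3, e4 1),
    (e4 2, p4 2 3), (e4 2, m4 2 3),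
    (e4 3, e4 2), (e4 3, e4 3)]

lemma sqrt2_ne : ((Real.sqrt 2 : ℝ)) ≠ 0 := by positivity

lemma sqrt2c_ne : ((Real.sqrt 2 : ℂ)) ≠ 0 := by
  simpa [Complex.ofReal_eq_zero] using sqrt2_ne

lemma dot4_e_left (x : Fin 4 → ℂ) (a : Fin 4) : dot4 (e4 a) x = x a := by
  fin_cases a <;> simp [dot4, e4, Fin.sum_univ_four]

lemma dot4_p_left (x : Fin 4 → ℂ) (a b : Fin 4) :
    dot4 (p4 a b) x = ((Real.sqrt 2 : ℂ))⁻¹ * (x a + x b) := by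
  fin_cases a <;> fin_cases b <;>
    simp [dot4, p4, e4, Fin.sum_univ_four, mul_add, add_mul] <;> ring

lemma dot4_m_left (x : Fin 4 → ℂ) (a b : Fin 4) :
    dot4 (m4 a b) x = ((Real.sqrt 2 : ℂ))⁻¹ * (x a - x b) := by
  fin_cases a <;> fin_cases b <;>
    simp [dot4, m4, e4, Fin.sum_univ_four, mul_sub, sub_mul, mul_add] <;> ring

lemma mulVec_e (N : Matrix (Fin 4) (Fin 4) ℂ) (b i : Fin 4) :
    N.mulVec (e4 b) i = N i b := by
  fin_cases b <;>
    simp [Matrix.mulVec, dotProduct, e4, Fin.sum_univ_four]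

lemma mulVec_p (N : Matrix (Fin 4) (Fin 4) ℂ) (a b i : Fin 4) :
    N.mulVec (p4 a b) i = ((Real.sqrt 2 : ℂ))⁻¹ * (N i a + N i b) := by
  fin_cases a <;> fin_cases b <;>
    simp [Matrix.mulVec, dotProduct, p4, e4, Fin.sum_univ_four, mul_add] <;> ring

lemma mulVec_m (N : Matrix (Fin 4) (Fin 4) ℂ) (a b i : Fin 4) :
    N.mulVec (m4 a b) i = ((Real.sqrt 2 : ℂ))⁻¹ * (N i a - N i b) := by
  fin_cases a <;> fin_cases b <;>
    simp [Matrix.mulVec, dotProduct, m4, e4, Fin.sum_univ_four, mul_sub, mul_add] <;> ring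


/-- if `N = M†M` is PSD and the measurement `M` on Alice's side preserves
orthogonality of `S₁`, i.e. `⟨a|N|a'⟩·⟨b|b'⟩ = 0` for all distinct product pairs in `S₁`,
then `N = diag(δ₀, γ, γ, γ)` for some `δ₀, γ ≥ 0`. -/
theorem stmt10 (N : Matrix (Fin 4) (Fin 4) ℂ) (hN : N.PosSemidef)
    (h : ∀ i j : Fin 16, i ≠ j →
      dot4 (S1 i).1 (N.mulVec (S1 j).1) * dot4 (S1 i).2 (S1 j).2 = 0) :
    ∃ δ γ : ℝ, 0 ≤ δ ∧ 0 ≤ γ ∧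
      N = Matrix.diagonal ![(δ : ℂ), (γ : ℂ), (γ : ℂ), (γ : ℂ)] := by
  -- Hermitian entries
  have herm : ∀ i j, N j i = star (N i j) := by
    intro i j
    have := congrFun (congrFun hN.1 j) i
    simpa [Matrix.conjTranspose_apply] using this.symm
  -- diagonal entries nonneg real
  have diag : ∀ i, N i i = ((N i i).re : ℂ) ∧ 0 ≤ (N i i).re := by
    intro i
    have h0 := hN.dotProduct_mulVec_nonneg (e4 i)
    have hv : dotProduct (star (e4 i)) (N.mulVec (e4 i)) = N i i := by
      fin_cases i <;>
        simp [dotProduct, e4, Fin.sum_univ_four, mulVec_e]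
    rw [hv] at h0
    rw [Complex.le_def] at h0
    constructor
    · exact (Complex.ext_iff.mpr ⟨rfl, by simpa using h0.2.symm⟩)
    · simpa using h0.1
  -- extract constraints
  have hA : dot4 (p4 1 2) (N.mulVec (e4 3)) * dot4 (e4 0) (e4 0) = 0 := h 4 6 (by decide)
  have hB : dot4 (m4 1 2) (N.mulVec (e4 3)) * dot4 (e4 0) (e4 0) = 0 := h 5 6 (by decide)
  have hC : dot4 (e4 0) (N.mulVec (p4 1 2)) * dot4 (p4 0 1) (e4 0) = 0 := h 0 4 (by decide)
  have hD : dot4 (e4 0) (N.mulVec (e4 2)) * dot4 (p4 2 3) (p4 2 3) = 0 := h 2 12 (by decide)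
  have hE : dot4 (e4 0) (N.mulVec (e4 3)) * dot4 (p4 0 1) (e4 0) = 0 := h 0 6 (by decide)
  have hF : dot4 (e4 1) (N.mulVec (p4 2 3)) * dot4 (p4 1 2) (e4 1) = 0 := h 7 10 (by decide)
  have hG : dot4 (p4 1 2) (N.mulVec (m4 1 2)) * dot4 (e4 0) (e4 0) = 0 := h 4 5 (by decide)
  have hH : dot4 (p4 2 3) (N.mulVec (m4 2 3)) * dot4 (e4 1) (e4 1) = 0 := h 10 11 (by decide)
  simp only [dot4_p_left, dot4_m_left, dot4_e_left, mulVec_e, mulVec_p, mulVec_m]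
    at hA hB hC hD hE hF hG hH
  simp [e4, p4, sqrt2c_ne] at hA hB hC hD hE hF hG hH
  field_simp [sqrt2c_ne] at hG hH
  have h13 : N 1 3 = 0 := by linear_combination (hA + hB) / 2
  have h23 : N 2 3 = 0 := by linear_combination (hA - hB) / 2
  have h01 : N 0 1 = 0 := by linear_combination hC - hD
  have h12 : N 1 2 = 0 := by linear_combination hF - h13
  have h10 : N 1 0 = 0 := by rw [herm, h01]; simp
  have h20 : N 2 0 = 0 := by rw [herm, hD]; simp
  have h30 : N 3 0 = 0 := by rw [herm, hE]; simp
  have h21 : N 2 1 = 0 := by rw [herm, h12]; simp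
  have h31 : N 3 1 = 0 := by rw [herm, h13]; simp
  have h32 : N 3 2 = 0 := by rw [herm, h23]; simp
  have h1122 : N 1 1 = N 2 2 := by linear_combination hG + h12 - h21
  have h2233 : N 2 2 = N 3 3 := by linear_combination hH + h23 - h32
  refine ⟨(N 0 0).re, (N 1 1).re, (diag 0).2, (diag 1).2, ?_⟩
  have d0 := (diag 0).1
  have d1 : N 1 1 = ((N 1 1).re : ℂ) := (diag 1).1
  have d2 : N 2 2 = ((N 1 1).re : ℂ) := by rw [← h1122]; exact d1
  have d3 : N 3 3 = ((N 1 1).re : ℂ) := by rw [← h2233, ← h1122]; exact d1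
  ext i j
  fin_cases i <;> fin_cases j <;>
    simp [Matrix.diagonal] <;>
    first
      | exact d0 | exact d1 | exact d2 | exact d3
      | exact h01 | exact hD | exact hE | exact h10 | exact h12 | exact h13
      | exact h20 | exact h21 | exact h23 | exact h30 | exact h31 | exact h32


end
end

section
/- Suppose N is a 4×4 positive semidefinite matrix acting on Bob's system such that ⟨ψ|(I⊗N)|ψ'⟩ = 0 for all distinct |ψ⟩,|ψ'⟩ in S₁, and additionally ⟨ψ|(I⊗N)|ψ⟩ is consistent with preserving the orthogonality structure (i.e., ⟨b|N|b'⟩⟨a|a'⟩ = 0 for all distinct pairs and ⟨0+1|N|0−1⟩ = ⟨2+3|N|2−3⟩ = ⟨1+2|N|1−2⟩ = 0). Then N is a scalar multiple of the identity. -/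
open scoped BigOperators ComplexOrder

noncomputable section

/-- if a PSD matrix `N` on Bob's side preserves the orthogonality of `S₁`,
i.e. `⟨a|a'⟩·⟨b|N|b'⟩ = 0` for all distinct product pairs, and in addition
`⟨0+1|N|0−1⟩ = ⟨2+3|N|2−3⟩ = ⟨1+2|N|1−2⟩ = 0`, then `N` is a scalar multiple of the
identity. -/
theorem stmt11 (N : Matrix (Fin 4) (Fin 4) ℂ) (hN : N.PosSemidef)
    (h : ∀ i j : Fin 16, i ≠ j →
      dot4 (S1 i).1 (S1 j).1 * dot4 (S1 i).2 (N.mulVec (S1 j).2) = 0)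
    (h1 : dot4 (p4 0 1) (N.mulVec (m4 0 1)) = 0)
    (h2 : dot4 (p4 2 3) (N.mulVec (m4 2 3)) = 0)
    (h3 : dot4 (p4 1 2) (N.mulVec (m4 1 2)) = 0) :
    ∃ c : ℂ, N = c • (1 : Matrix (Fin 4) (Fin 4) ℂ) := by
  have h47 := h 4 7 (by decide)
  have h48 := h 4 8 (by decide)
  have h49 := h 4 9 (by decide)
  have h79 := h 7 9 (by decide)
  have h89 := h 8 9 (by decide)
  have hA := h 10 12 (by decide)
  simp only [show S1 4 = (p4 1 2, e4 0) from rfl, show S1 7 = (e4 1, p4 1 2) from rfl,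
    show S1 8 = (e4 1, m4 1 2) from rfl, show S1 9 = (e4 1, e4 3) from rfl,
    show S1 10 = (p4 2 3, e4 1) from rfl, show S1 12 = (e4 2, p4 2 3) from rfl] at h47 h48 h49 h79 h89 hA
  simp [dot4, p4, m4, e4, Matrix.mulVec, dotProduct, Fin.sum_univ_four,
    smul_eq_mul, mul_add, mul_sub] at h47 h48 h49 h79 h89 hA h1 h2 h3
  have hs : ((Real.sqrt 2 : ℝ) : ℂ) ≠ 0 := by
    exact_mod_cast (Real.sqrt_pos.mpr (by norm_num)).ne'
  have e01 : N 0 1 = 0 := by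
    field_simp at h47 h48
    linear_combination (h47 + h48) / 2
  have e02 : N 0 2 = 0 := by
    field_simp at h47 h48
    linear_combination (h47 - h48) / 2
  have e03 : N 0 3 = 0 := h49
  have e13 : N 1 3 = 0 := by
    field_simp at h79 h89
    linear_combination (h79 + h89) / 2
  have e23 : N 2 3 = 0 := by
    field_simp at h79 h89
    linear_combination (h79 - h89) / 2
  have e12 : N 1 2 = 0 := by
    field_simp at hA
    linear_combination hA - e13
  have hH := hN.1
  have herm : ∀ i j, N j i = star (N i j) := by
    intro i j
    conv_lhs => rw [← hH]
    rfl
  have e10 : N 1 0 = 0 := by rw [herm 0 1, e01, star_zero]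
  have e20 : N 2 0 = 0 := by rw [herm 0 2, e02, star_zero]
  have e30 : N 3 0 = 0 := by rw [herm 0 3, e03, star_zero]
  have e21 : N 2 1 = 0 := by rw [herm 1 2, e12, star_zero]
  have e31 : N 3 1 = 0 := by rw [herm 1 3, e13, star_zero]
  have e32 : N 3 2 = 0 := by rw [herm 2 3, e23, star_zero]
  have d01 : N 1 1 = N 0 0 := by
    field_simp [e01, e10] at h1
    linear_combination -h1 + e10 - e01
  have d12 : N 2 2 = N 1 1 := by
    field_simp [e12, e21] at h3
    linear_combination -h3 + e21 - e12
  have d23 : N 3 3 = N 2 2 := by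
    field_simp [e23, e32] at h2
    linear_combination -h2 + e32 - e23
  refine ⟨N 0 0, ?_⟩
  ext i j
  fin_cases i <;> fin_cases j <;>
    simp [Matrix.one_apply, e01, e02, e03, e10, e12, e13, e20, e21, e23, e30, e31, e32, d01, d12, d23]

end
end

section
/- For the tiles UPB set U = {|0⟩(|0⟩−|1⟩), (|0⟩−|1⟩)|2⟩, |2⟩(|1⟩−|2⟩), (|1⟩−|2⟩)|0⟩, (|0⟩+|1⟩+|2⟩)(|0⟩+|1⟩+|2⟩)} in ℂ³⊗ℂ³, if a 3×3 positive semidefinite matrix M satisfies ⟨ψ|(M⊗I)|ψ'⟩ = 0 for all distinct ψ, ψ' ∈ U, then M is a scalar multiple of the identity matrix. -/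
open scoped BigOperators ComplexOrder

noncomputable section

def e3 (i : Fin 3) : Fin 3 → ℂ := fun j => if j = i then 1 else 0
def tp3 (a b : Fin 3 → ℂ) : Fin 3 × Fin 3 → ℂ := fun x => a x.1 * b x.2
def dotT3 (x y : Fin 3 × Fin 3 → ℂ) : ℂ := ∑ p, star (x p) * y p

/-- The five (unnormalized) tiles UPB states in ℂ³⊗ℂ³. -/
def U : Fin 5 → (Fin 3 × Fin 3 → ℂ) :=
  ![tp3 (e3 0) (e3 0 - e3 1),
    tp3 (e3 0 - e3 1) (e3 2),
    tp3 (e3 2) (e3 1 - e3 2),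
    tp3 (e3 1 - e3 2) (e3 0),
    tp3 (e3 0 + e3 1 + e3 2) (e3 0 + e3 1 + e3 2)]

/-- Action of `M ⊗ I` on ℂ³⊗ℂ³, `M` acting on the first factor. -/
def MI3 (M : Matrix (Fin 3) (Fin 3) ℂ) (w : Fin 3 × Fin 3 → ℂ) : Fin 3 × Fin 3 → ℂ :=
  fun x => ∑ k, M x.1 k * w (k, x.2)

/-- if a PSD matrix `M` satisfies `⟨ψ|(M⊗I)|ψ'⟩ = 0` for all distinct
states of the tiles UPB, then `M` is a scalar multiple of the identity. -/
theorem stmt14 (M : Matrix (Fin 3) (Fin 3) ℂ) (hM : M.PosSemidef)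
    (h : ∀ i j : Fin 5, i ≠ j → dotT3 (U i) (MI3 M (U j)) = 0) :
    ∃ c : ℂ, M = c • (1 : Matrix (Fin 3) (Fin 3) ℂ) := by
  have h02 := h 0 2 (by decide)
  have h20 := h 2 0 (by decide)
  have h03 := h 0 3 (by decide)
  have h30 := h 3 0 (by decide)
  have h12 := h 1 2 (by decide)
  have h21 := h 2 1 (by decide)
  have h14 := h 1 4 (by decide)
  have h34 := h 3 4 (by decide)
  simp (config := { decide := true }) only [dotT3, MI3, U, tp3, e3,
    Fintype.sum_prod_type, Fin.sum_univ_three, Matrix.cons_val_zero, Matrix.cons_val_one,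
    Matrix.head_cons, Matrix.cons_val_two, Matrix.tail_cons, Matrix.cons_val_three,
    Matrix.cons_val_four, Matrix.head_fin_const, Pi.sub_apply, Pi.add_apply,
    if_true, if_false, star_one, star_zero, star_neg, star_sub, star_add, map_one, map_zero,
    map_sub, one_mul, zero_mul, mul_one, mul_zero, sub_zero, zero_sub, add_zero, zero_add,
    map_neg, mul_neg, neg_mul, neg_neg, neg_zero, sub_self] at h02 h20 h03 h30 h12 h21 h14 h34
  refine ⟨M 0 0, ?_⟩
  ext i j
  fin_cases i <;> fin_cases j <;>
    simp (config := { decide := true }) only [Matrix.smul_apply, Matrix.one_apply,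
      Fin.mk_zero, Fin.mk_one, Fin.isValue, show (⟨2, by norm_num⟩ : Fin 3) = 2 from rfl,
      smul_eq_mul, mul_one, mul_zero, if_true, if_false, reduceIte]
  · linear_combination h03 - h02
  · linear_combination -h02
  · linear_combination h30 - h20
  · linear_combination -h14 + h03 - h02 - h30 + h20 - h12
  · linear_combination h12 - h02
  · linear_combination -h20
  · linear_combination h21 - h20
  · linear_combination -h34 - h14 + h03 - 2*h02 + 2*h20 - h21


end
end

section
/- Exactly one POVM outcome identifies each state: with M₁ = P[|0⟩−|4⟩] on Bob's ℂ⁶ applied as I⊗M₁ to the set S₃, the only states of S₃ not annihilated are |φ₃⟩ = (|1⟩−|2⟩)⊗(|0⟩−|4⟩) and |φ₈⟩ = (|4⟩−|5⟩)⊗(|0⟩−|4⟩); moreover these two surviving states have orthogonal Alice factors (|1⟩−|2⟩) ⊥ (|4⟩−|5⟩). -/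
open scoped BigOperators

noncomputable section

/-- `P[v]`: orthogonal projection onto the span of the (unnormalized) vector `v`. -/
def proj (v : Fin 6 → ℂ) : Matrix (Fin 6) (Fin 6) ℂ :=
  fun i j => (dot6 v v)⁻¹ * (v i * star (v j))

/-- Bob's POVM element `M₁ = P[|0⟩−|4⟩]`. -/
def M1 : Matrix (Fin 6) (Fin 6) ℂ := proj (e6 0 - e6 4)

/-- Action of `I ⊗ M₁` on ℂ⁶⊗ℂ⁶, `M₁` acting on the second (Bob) factor. -/
def IM (w : Fin 6 × Fin 6 → ℂ) : Fin 6 × Fin 6 → ℂ :=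
  fun x => ∑ k, M1 x.2 k * w (x.1, k)

lemma dvv : dot6 (e6 0 - e6 4) (e6 0 - e6 4) = 2 := by
  simp [dot6, e6, Fin.sum_univ_six]
  norm_num

lemma M1_apply (j k : Fin 6) :
    M1 j k = (2:ℂ)⁻¹ * ((e6 0 - e6 4) j * star ((e6 0 - e6 4) k)) := by
  simp [M1, proj, dvv]

lemma IM_tp (a b : Fin 6 → ℂ) :
    IM (tp6 a b) = fun x => a x.1 * ∑ k, M1 x.2 k * b k := by
  funext x
  simp only [IM, tp6]
  rw [Finset.mul_sum]
  exact Finset.sum_congr rfl fun i _ => by ring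

lemma key (a b : Fin 6 → ℂ) (hb : ∀ j, ∑ k, M1 j k * b k = 0) : IM (tp6 a b) = 0 := by
  rw [IM_tp]
  funext x
  simp [hb x.2]

lemma hb1 : ∀ j, ∑ k, M1 j k * (e6 0 - e6 1 + e6 4 - e6 5) k = 0 := by
  intro j
  simp [Fin.sum_univ_six, M1_apply, e6]
  try ring

lemma hb2 : ∀ j, ∑ k, M1 j k * (e6 1 - e6 2 + e6 5 - e6 3) k = 0 := by
  intro j
  simp [Fin.sum_univ_six, M1_apply, e6]
  try ring

lemma hb3 : ∀ j, ∑ k, M1 j k * (e6 2 - e6 3) k = 0 := by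
  intro j
  simp [Fin.sum_univ_six, M1_apply, e6]

lemma hb4 : ∀ j, ∑ k, M1 j k * (e6 0 + e6 1 + e6 2 + e6 3 + e6 4 + e6 5) k = 0 := by
  intro j
  simp [Fin.sum_univ_six, M1_apply, e6]
  try ring

/-- `I⊗M₁` annihilates every state of `S₃` except
`|φ₃⟩ = (|1⟩−|2⟩)⊗(|0⟩−|4⟩)` and `|φ₈⟩ = (|4⟩−|5⟩)⊗(|0⟩−|4⟩)` (indices `2` and `7`),
and the two survivors have orthogonal Alice factors. -/
theorem stmt16 :
    (∀ i : Fin 10, i ≠ 2 → i ≠ 7 → IM (φ i) = 0) ∧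
    IM (φ 2) ≠ 0 ∧ IM (φ 7) ≠ 0 ∧
    dot6 (e6 1 - e6 2) (e6 4 - e6 5) = 0 := by
  refine ⟨?_, ?_, ?_, ?_⟩
  · intro i h2 h7
    fin_cases i <;> simp only [φ, Matrix.cons_val_zero, Matrix.cons_val_one, Matrix.head_cons,
      Matrix.cons_val_succ] <;>
      first
        | exact key _ _ hb1
        | exact key _ _ hb2
        | exact key _ _ hb3
        | exact key _ _ hb4
        | simp_all
  · intro h
    have := congrFun h (1, 0)
    rw [show φ 2 = tp6 (e6 1 - e6 2) (e6 0 - e6 4) from rfl] at this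
    simp [IM, tp6, M1_apply, e6, Fin.sum_univ_six] at this
  · intro h
    have := congrFun h (4, 0)
    rw [show φ 7 = tp6 (e6 4 - e6 5) (e6 0 - e6 4) from rfl] at this
    simp [IM, tp6, M1_apply, e6, Fin.sum_univ_six] at this
  · simp [dot6, e6, Fin.sum_univ_six]

end
end
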